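/- For the Lagrangian L(q₀, q₁, q₂) = ½ μ q₂² with μ ≠ 0, the function W(q₀, a₀) = c₂ q₀ + (μ/(6c₂)) a₀³ − (c/c₂) a₀ (with c₂ ≠ 0) satisfies the Schmidt Hamilton–Jacobi equation −(∂W/∂q₀)(∂W/∂a₀) + ½ μ a₀² = c identically on ℝ². -/

import Mathlib

/-- For `L = ½μq₂²`, the function `W(q₀,a₀) = c₂q₀ + (μ/(6c₂))a₀³ − (c/c₂)a₀`
solves the Schmidt Hamilton–Jacobi equation `−(∂W/∂q₀)(∂W/∂a₀) + ½μa₀² = c`. -/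
theorem stmt_5 (μ c c₂ : ℝ) (hμ : μ ≠ 0) (hc₂ : c₂ ≠ 0)
    (W : ℝ × ℝ → ℝ)
    (hW : ∀ p : ℝ × ℝ, W p = c₂ * p.1 + μ / (6 * c₂) * p.2 ^ 3 - c / c₂ * p.2) :
    ∀ p : ℝ × ℝ, -(fderiv ℝ W p (1, 0) * fderiv ℝ W p (0, 1)) + μ / 2 * p.2 ^ 2 = c := by
  have hWe : W = fun p : ℝ × ℝ => c₂ * p.1 + μ / (6 * c₂) * p.2 ^ 3 - c / c₂ * p.2 :=
    funext hW
  intro p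
  have h1 : HasFDerivAt (fun p : ℝ × ℝ => p.1) (ContinuousLinearMap.fst ℝ ℝ ℝ) p :=
    hasFDerivAt_fst
  have h2 : HasFDerivAt (fun p : ℝ × ℝ => p.2) (ContinuousLinearMap.snd ℝ ℝ ℝ) p :=
    hasFDerivAt_snd
  have h3 : HasFDerivAt (fun p : ℝ × ℝ => p.2 ^ 3)
      (((3 : ℕ) * p.2 ^ 2) • (ContinuousLinearMap.snd ℝ ℝ ℝ)) p := by
    simpa [Function.comp_def] using (hasDerivAt_pow 3 p.2).comp_hasFDerivAt p h2
  have h : HasFDerivAt W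
      (c₂ • ContinuousLinearMap.fst ℝ ℝ ℝ +
        (μ / (6 * c₂)) • ((3 : ℕ) * p.2 ^ 2) • ContinuousLinearMap.snd ℝ ℝ ℝ -
        (c / c₂) • ContinuousLinearMap.snd ℝ ℝ ℝ) p := by
    rw [hWe]
    exact ((h1.const_mul c₂).add (h3.const_mul (μ / (6 * c₂)))).sub (h2.const_mul (c / c₂))
  rw [h.fderiv]
  simp
  field_simp
  ring
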